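/- Let G be a connected finite simple graph with n vertices. For any integer k with 1 ≤ k ≤ n, the number of connected induced subgraphs of G with exactly k vertices is at least ⌈n/k⌉. -/

import Mathlib

open SimpleGraph

private lemma singleton_induce_connected {V : Type*} (G : SimpleGraph V) (v : V) :
    (G.induce ({v} : Set V)).Connected := by
  rw [connected_iff_exists_forall_reachable]
  refine ⟨⟨v, rfl⟩, ?_⟩
  rintro ⟨w, rfl⟩
  exact Reachable.refl _

private lemma walk_crossing {V : Type*} (G : SimpleGraph V) (s : Set V) :
    ∀ {u v : V}, G.Walk u v → u ∈ s → v ∉ s →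
      ∃ a b, a ∈ s ∧ b ∉ s ∧ G.Adj a b := by
  intro u v p
  induction p with
  | nil => intro h h'; exact absurd h h'
  | @cons x y z hxy q ih =>
    intro hx hz
    by_cases hy : y ∈ s
    · exact ih hy hz
    · exact ⟨x, y, hx, hy, hxy⟩

private lemma grow_step {V : Type*} [Fintype V] [DecidableEq V] (G : SimpleGraph V) (hG : G.Connected)
    (s : Finset V) (hs : (G.induce (↑s : Set V)).Connected) (hlt : s.card < Fintype.card V) :
    ∃ w ∉ s, (G.induce (↑(insert w s) : Set V)).Connected := by
  classical
  obtain ⟨u, hu⟩ : ∃ u, u ∉ s := by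
    by_contra h
    push_neg at h
    have : s = Finset.univ := Finset.eq_univ_iff_forall.mpr h
    simp [this, Finset.card_univ] at hlt
  obtain ⟨v, hv⟩ := hs.nonempty
  obtain ⟨a, b, ha, hb, hab⟩ := walk_crossing G (↑s) (hG.preconnected v u).some hv hu
  refine ⟨b, hb, ?_⟩
  have : (↑(insert b s) : Set V) = (↑s : Set V) ∪ {a, b} := by
    ext x
    simp only [Finset.coe_insert, Set.mem_insert_iff, Finset.mem_coe, Set.mem_union,
      Set.mem_insert_iff, Set.mem_singleton_iff]
    constructor
    · rintro (rfl | h) <;> tauto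
    · rintro (h | rfl | rfl) <;> tauto
  rw [this]
  exact induce_union_connected hs.preconnected (induce_pair_connected_of_adj hab).preconnected
    ⟨a, ha, by simp⟩

private lemma exists_connected_containing {V : Type*} [Fintype V] (G : SimpleGraph V)
    (hG : G.Connected) (k : ℕ) (hk1 : 1 ≤ k) (hk2 : k ≤ Fintype.card V) (v : V) :
    ∃ s : Finset V, v ∈ s ∧ s.card = k ∧ (G.induce (↑s : Set V)).Connected := by
  classical
  induction k with
  | zero => omega
  | succ n ih =>
    rcases Nat.eq_or_lt_of_le hk1 with h1 | h1
    · refine ⟨{v}, by simp, by simp [← h1], ?_⟩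
      rw [Finset.coe_singleton]
      exact singleton_induce_connected G v
    · obtain ⟨s, hvs, hcard, hconn⟩ := ih (by omega) (by omega)
      obtain ⟨w, hw, hconn'⟩ := grow_step G hG s hconn (by omega)
      exact ⟨insert w s, Finset.mem_insert_of_mem hvs,
        by rw [Finset.card_insert_of_notMem hw, hcard], hconn'⟩

/-- A connected graph on `n` vertices has at least `⌈n/k⌉` connected induced
subgraphs with exactly `k` vertices, for every `1 ≤ k ≤ n`. -/
theorem count_connected_induced_subgraphs {V : Type*} [Fintype V] (G : SimpleGraph V)
    (hG : G.Connected) (k : ℕ) (hk1 : 1 ≤ k) (hk2 : k ≤ Fintype.card V) :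
    ⌈(Fintype.card V : ℚ) / (k : ℚ)⌉ ≤
      ({s : Finset V | s.card = k ∧ (G.induce (↑s : Set V)).Connected}.ncard : ℤ) := by
  classical
  set T : Finset (Finset V) :=
    Finset.univ.filter (fun s => s.card = k ∧ (G.induce (↑s : Set V)).Connected) with hT
  have hncard : {s : Finset V | s.card = k ∧ (G.induce (↑s : Set V)).Connected}.ncard
      = T.card := by
    rw [hT]
    rw [← Set.ncard_coe_finset]
    congr 1
    ext s
    simp
  have hcover : (Finset.univ : Finset V) ⊆ T.biUnion id := by
    intro v _
    obtain ⟨s, hvs, hcard, hconn⟩ := exists_connected_containing G hG k hk1 hk2 v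
    exact Finset.mem_biUnion.mpr ⟨s, by simp [hT, hcard, hconn], hvs⟩
  have hcount : Fintype.card V ≤ T.card * k := by
    calc Fintype.card V = (Finset.univ : Finset V).card := (Finset.card_univ).symm
    _ ≤ (T.biUnion id).card := Finset.card_le_card hcover
    _ ≤ ∑ s ∈ T, (id s).card := Finset.card_biUnion_le
    _ = T.card * k := by
        rw [Finset.sum_congr rfl (fun s hs => ?_), Finset.sum_const, smul_eq_mul]
        simp only [hT, Finset.mem_filter] at hs
        exact hs.2.1
  rw [hncard, Int.ceil_le]
  rw [div_le_iff₀ (by positivity)]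
  push_cast
  exact_mod_cast (by exact_mod_cast hcount : (Fintype.card V : ℚ) ≤ (T.card : ℚ) * k)
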